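/- arXiv:1903.03153 — 2 statements merged into one kernel-verified Lean document; each statement's English description precedes it below -/
import Mathlib

section
/- Combining the mixture-posterior identity with the strong law of large numbers: under the hypotheses of Lemma 1 (mixture prior π = (1−η₁)π₀ + η₁π₁, posterior density f(θ|y), marginal likelihoods m₀, m₁ > 0), if θ⁽¹⁾, θ⁽²⁾, … are i.i.d. draws from the posterior distribution, then ((1−η₁)/η₁)·p̂_N/(1−p̂_N) → m₁/m₀ almost surely, where p̂_N = (1/N)∑_{i=1}^N 1_{θ⁽ⁱ⁾ ∈ Θ₁}. -/
open MeasureTheory ProbabilityTheory Filter ENNReal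

theorem stmt_6 {Θ : Type*} [MeasurableSpace Θ] (μ : Measure Θ) [SigmaFinite μ]
    (Θ₀ Θ₁ : Set Θ) (hΘ₀ : MeasurableSet Θ₀) (hΘ₁ : MeasurableSet Θ₁)
    (hdisj : Disjoint Θ₀ Θ₁) (hunion : Θ₀ ∪ Θ₁ = Set.univ)
    (π₀ π₁ : Θ → ℝ≥0∞) (hπ₀m : Measurable π₀) (hπ₁m : Measurable π₁)
    (hπ₀dens : ∫⁻ θ, π₀ θ ∂μ = 1) (hπ₁dens : ∫⁻ θ, π₁ θ ∂μ = 1)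
    (hπ₀supp : ∀ θ ∈ Θ₁, π₀ θ = 0) (hπ₁supp : ∀ θ ∈ Θ₀, π₁ θ = 0)
    (η₁ : ℝ) (hη₁ : η₁ ∈ Set.Ioo (0 : ℝ) 1)
    (f : Θ → ℝ≥0∞) (hfm : Measurable f)
    (π : Θ → ℝ≥0∞)
    (hπ : π = fun θ => ENNReal.ofReal (1 - η₁) * π₀ θ + ENNReal.ofReal η₁ * π₁ θ)
    (hZpos : 0 < ∫⁻ θ, π θ * f θ ∂μ) (hZfin : ∫⁻ θ, π θ * f θ ∂μ < ∞)
    (post : Θ → ℝ≥0∞) (hpost : post = fun θ => π θ * f θ / ∫⁻ θ', π θ' * f θ' ∂μ)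
    (m₀ m₁ : ℝ≥0∞) (hm₀ : m₀ = ∫⁻ θ in Θ₀, π₀ θ * f θ ∂μ)
    (hm₁ : m₁ = ∫⁻ θ in Θ₁, π₁ θ * f θ ∂μ)
    (hm₀pos : 0 < m₀) (hm₀fin : m₀ < ∞) (hm₁pos : 0 < m₁) (hm₁fin : m₁ < ∞)
    (ν : Measure Θ) (hν : ν = μ.withDensity post)
    {Ω : Type*} [MeasurableSpace Ω] (P : Measure Ω) [IsProbabilityMeasure P]
    (θdraw : ℕ → Ω → Θ) (hmeas : ∀ i, Measurable (θdraw i))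
    (hindep : iIndepFun θdraw P)
    (hlaw : ∀ i, Measure.map (θdraw i) P = ν)
    (phat : ℕ → Ω → ℝ)
    (hphat : phat = fun (N : ℕ) ω => (N : ℝ)⁻¹ *
      ∑ i ∈ Finset.range N, Θ₁.indicator (fun _ => (1 : ℝ)) (θdraw i ω)) :
    ∀ᵐ ω ∂P, Tendsto
      (fun N : ℕ => ((1 - η₁) / η₁) * (phat N ω / (1 - phat N ω)))
      atTop (nhds (m₁ / m₀).toReal) := by
  obtain ⟨hη₁0, hη₁1⟩ := hη₁
  have h1η : (0:ℝ) < 1 - η₁ := by linarith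
  set Z := ∫⁻ θ, π θ * f θ ∂μ with hZdef
  have hZne : Z ≠ 0 := hZpos.ne'
  have hZnetop : Z ≠ ∞ := hZfin.ne
  have hπfm : Measurable fun θ => π θ * f θ := by
    subst hπ; exact ((measurable_const.mul hπ₀m).add (measurable_const.mul hπ₁m)).mul hfm
  -- set integrals of π * f on Θ₀ and Θ₁
  have hI0 : ∫⁻ θ in Θ₀, π θ * f θ ∂μ = ENNReal.ofReal (1 - η₁) * m₀ := by
    rw [hm₀, ← lintegral_const_mul _ (f := fun θ => π₀ θ * f θ) (hπ₀m.mul hfm)]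
    refine setLIntegral_congr_fun hΘ₀ (fun θ hθ => ?_)
    simp [hπ, hπ₁supp θ hθ, mul_assoc]
  have hI1 : ∫⁻ θ in Θ₁, π θ * f θ ∂μ = ENNReal.ofReal η₁ * m₁ := by
    rw [hm₁, ← lintegral_const_mul _ (f := fun θ => π₁ θ * f θ) (hπ₁m.mul hfm)]
    refine setLIntegral_congr_fun hΘ₁ (fun θ hθ => ?_)
    simp [hπ, hπ₀supp θ hθ, mul_assoc]
  have hZsplit : Z = ENNReal.ofReal (1 - η₁) * m₀ + ENNReal.ofReal η₁ * m₁ := by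
    rw [hZdef, ← setLIntegral_univ, ← hunion,
      lintegral_union hΘ₁ hdisj, hI0, hI1]
  -- ν of the sets
  have hνset : ∀ s : Set Θ, MeasurableSet s →
      ν s = (∫⁻ θ in s, π θ * f θ ∂μ) / Z := by
    intro s hs
    rw [hν, withDensity_apply _ hs, hpost]
    simp only [div_eq_mul_inv, ← hZdef]
    rw [lintegral_mul_const _ hπfm]
  have hν1 : ν Θ₁ = ENNReal.ofReal η₁ * m₁ / Z := by
    rw [hνset Θ₁ hΘ₁, hI1]
  -- ν is a probability measure
  have hνuniv : ν Set.univ = 1 := by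
    rw [hνset Set.univ MeasurableSet.univ, setLIntegral_univ, ← hZdef,
      ENNReal.div_self hZne hZnetop]
  haveI : IsProbabilityMeasure ν := ⟨hνuniv⟩
  -- real versions
  set A : ℝ := (1 - η₁) * m₀.toReal with hA
  set B : ℝ := η₁ * m₁.toReal with hB
  have hApos : 0 < A := mul_pos h1η (ENNReal.toReal_pos hm₀pos.ne' hm₀fin.ne)
  have hBpos : 0 < B := mul_pos hη₁0 (ENNReal.toReal_pos hm₁pos.ne' hm₁fin.ne)
  have hZtoReal : Z.toReal = A + B := by
    rw [hZsplit, ENNReal.toReal_add (by finiteness) (by finiteness),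
      ENNReal.toReal_mul, ENNReal.toReal_mul, ENNReal.toReal_ofReal h1η.le,
      ENNReal.toReal_ofReal hη₁0.le]
  set p : ℝ := (ν Θ₁).toReal with hp
  have hpval : p = B / (A + B) := by
    rw [hp, hν1, ENNReal.toReal_div, hZtoReal, ENNReal.toReal_mul,
      ENNReal.toReal_ofReal hη₁0.le]
  have hABpos : (0:ℝ) < A + B := by linarith
  have h1p : 1 - p = A / (A + B) := by
    rw [hpval]; field_simp; ring
  have h1pne : 1 - p ≠ 0 := by
    rw [h1p]; positivity
  -- the sequence of indicators
  set g : Θ → ℝ := Θ₁.indicator (fun _ => (1:ℝ)) with hg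
  have hgm : Measurable g := measurable_const.indicator hΘ₁
  set X : ℕ → Ω → ℝ := fun i ω => g (θdraw i ω) with hX
  have hXm : ∀ i, Measurable (X i) := fun i => hgm.comp (hmeas i)
  have hmap : ∀ i, Measure.map (X i) P = Measure.map g ν := fun i => by
    show Measure.map (g ∘ θdraw i) P = _
    rw [← Measure.map_map hgm (hmeas i), hlaw i]
  have hident : ∀ i, IdentDistrib (X i) (X 0) P P := fun i =>
    ⟨(hXm i).aemeasurable, (hXm 0).aemeasurable, by rw [hmap i, hmap 0]⟩
  have hint : Integrable (X 0) P := by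
    have : Integrable g ν := by
      refine (integrable_const (1:ℝ)).indicator hΘ₁
    rw [hX]
    have := (integrable_map_measure hgm.aestronglyMeasurable
      (hmeas 0).aemeasurable).mp (by rwa [hlaw 0])
    exact this
  have hpairwise : Pairwise (Function.onFun (IndepFun · · P) X) := by
    intro i j hij
    exact (hindep.comp (fun _ => g) (fun _ => hgm)).indepFun hij
  have hE : ∫ ω, X 0 ω ∂P = p := by
    rw [hX]
    rw [← integral_map (hmeas 0).aemeasurable hgm.aestronglyMeasurable, hlaw 0, hg,
      integral_indicator_const (1:ℝ) hΘ₁]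
    simp [hp, Measure.real]
  have hslln := strong_law_ae_real X hint hpairwise hident
  rw [hE] at hslln
  filter_upwards [hslln] with ω hω
  have hphatlim : Tendsto (fun N => phat N ω) atTop (nhds p) := by
    rw [hphat]
    simpa [div_eq_inv_mul] using hω
  have hfinal : Tendsto (fun N : ℕ => ((1 - η₁) / η₁) * (phat N ω / (1 - phat N ω)))
      atTop (nhds (((1 - η₁) / η₁) * (p / (1 - p)))) :=
    (hphatlim.div (tendsto_const_nhds.sub hphatlim) h1pne).const_mul _
  have hm₀t : m₀.toReal ≠ 0 := (ENNReal.toReal_pos hm₀pos.ne' hm₀fin.ne).ne'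
  have key : (1 - η₁) / η₁ * (p / (1 - p)) = (m₁ / m₀).toReal := by
    rw [h1p, hpval, ENNReal.toReal_div, hA, hB]
    field_simp
  exact key ▸ hfinal
end

section
/- Let f : ℝ → ℝ be a bounded continuous nonnegative function with f not identically zero on (−δ, δ), and for τ > 0 let m₁(τ) = ∫_{|θ|>δ} f(θ) · φ_τ(θ)/(2(1−Φ(δ/τ))) dθ, where φ_τ is the N(0,τ²) density and the integrand is the truncated-normal alternative prior. If f(θ) → 0 as |θ| → ∞, then m₁(τ) → 0 as τ → ∞. -/
open MeasureTheory ProbabilityTheory Filter Real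

noncomputable def stdNormalCdf (x : ℝ) : ℝ := ((gaussianReal 0 1) (Set.Iic x)).toReal

noncomputable def phi1 (u : ℝ) : ℝ := (Real.sqrt (2 * Real.pi))⁻¹ * Real.exp (-u ^ 2 / 2)

lemma phi1_eq : phi1 = gaussianPDFReal 0 1 := by
  funext x
  simp [phi1, gaussianPDFReal]

lemma phi1_integrable : Integrable phi1 := by
  rw [phi1_eq]; exact integrable_gaussianPDFReal 0 1

lemma phi1_nonneg (u : ℝ) : 0 ≤ phi1 u := by
  rw [phi1_eq]; exact gaussianPDFReal_nonneg 0 1 u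

lemma cdf_compl (x : ℝ) :
    1 - stdNormalCdf x = ((gaussianReal 0 1) (Set.Ioi x)).toReal := by
  have h1 : (gaussianReal 0 1) (Set.Iic x) + (gaussianReal 0 1) (Set.Ioi x) = 1 := by
    rw [← measure_union (Set.Iic_disjoint_Ioi le_rfl) measurableSet_Ioi,
      Set.Iic_union_Ioi, measure_univ]
  have h2 : stdNormalCdf x + ((gaussianReal 0 1) (Set.Ioi x)).toReal = 1 := by
    rw [stdNormalCdf, ← ENNReal.toReal_add (measure_ne_top _ _) (measure_ne_top _ _), h1]
    simp
  linarith

lemma gauss_Ioi_pos (x : ℝ) : 0 < ((gaussianReal 0 1) (Set.Ioi x)).toReal := by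
  rw [gaussianReal_apply_eq_integral 0 one_ne_zero]
  have hint : IntegrableOn (gaussianPDFReal 0 1) (Set.Ioi x) :=
    (integrable_gaussianPDFReal 0 1).integrableOn
  have hpos : 0 < ∫ y in Set.Ioi x, gaussianPDFReal 0 1 y := by
    rw [setIntegral_pos_iff_support_of_nonneg_ae
      (ae_of_all _ fun y => gaussianPDFReal_nonneg 0 1 y) hint]
    have hsupp : Function.support (gaussianPDFReal 0 1) = Set.univ := by
      ext y; simp [Function.mem_support, (gaussianPDFReal_pos 0 1 y one_ne_zero).ne']
    rw [hsupp, Set.univ_inter]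
    simp [Real.volume_Ioi]
  rw [ENNReal.toReal_ofReal hpos.le]
  exact hpos

lemma phi1_continuous : Continuous phi1 := by
  unfold phi1
  fun_prop

theorem stmt_12 (δ : ℝ) (hδ : 0 < δ)
    (f : ℝ → ℝ) (hfcont : Continuous f) (hfbdd : ∃ C, ∀ x, f x ≤ C)
    (hfnonneg : ∀ x, 0 ≤ f x)
    (hfnontriv : ∃ θ ∈ Set.Ioo (-δ) δ, f θ ≠ 0)
    (hfvanish : Tendsto f atTop (nhds 0) ∧ Tendsto f atBot (nhds 0))
    (m₁ : ℝ → ℝ)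
    (hm₁ : m₁ = fun τ => ∫ θ in {θ : ℝ | |θ| > δ},
      f θ * ((Real.sqrt (2 * Real.pi * τ ^ 2))⁻¹ * Real.exp (-θ ^ 2 / (2 * τ ^ 2)) /
        (2 * (1 - stdNormalCdf (δ / τ))))) :
    Tendsto m₁ atTop (nhds 0) := by
  obtain ⟨C, hC⟩ := hfbdd
  have hC0 : 0 ≤ C := le_trans (hfnonneg 0) (hC 0)
  set S : Set ℝ := {θ : ℝ | |θ| > δ} with hSdef
  have hSmeas : MeasurableSet S := measurableSet_lt measurable_const continuous_abs.measurable
  set F : ℝ → ℝ → ℝ :=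
    fun τ u => Set.indicator {u : ℝ | |u| > δ / τ} (fun u => f (τ * u) * phi1 u) u with hFdef
  set J : ℝ → ℝ := fun τ => ∫ u, F τ u with hJdef
  have hFnonneg : ∀ τ u, 0 ≤ F τ u := fun τ u =>
    Set.indicator_nonneg (fun y _ => mul_nonneg (hfnonneg _) (phi1_nonneg y)) u
  have hFle : ∀ τ u, F τ u ≤ f (τ * u) * phi1 u := fun τ u =>
    Set.indicator_le_self' (fun y _ => mul_nonneg (hfnonneg _) (phi1_nonneg y)) u
  have hFleC : ∀ τ u, F τ u ≤ C * phi1 u := fun τ u =>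
    (hFle τ u).trans (mul_le_mul_of_nonneg_right (hC _) (phi1_nonneg u))
  -- dominated convergence
  have hJ0 : Tendsto J atTop (nhds 0) := by
    have h := tendsto_integral_filter_of_dominated_convergence (μ := volume) (l := atTop)
      (F := F) (f := fun _ : ℝ => (0 : ℝ)) (bound := fun u => C * phi1 u)
      (Eventually.of_forall fun τ => ?_)
      (Eventually.of_forall fun τ => ae_of_all _ fun u => ?_)
      (phi1_integrable.const_mul C) ?_
    · simpa using h
    · -- measurability
      have hset : MeasurableSet {u : ℝ | |u| > δ / τ} :=
        measurableSet_lt measurable_const continuous_abs.measurable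
      exact (((hfcont.comp (continuous_const.mul continuous_id)).mul
        phi1_continuous).measurable.indicator hset).aestronglyMeasurable
    · -- bound
      rw [Real.norm_eq_abs, abs_of_nonneg (hFnonneg τ u)]
      exact hFleC τ u
    · -- pointwise limit
      filter_upwards [compl_mem_ae_iff.mpr (measure_singleton (0 : ℝ))] with u hu
      have hu0 : u ≠ 0 := by simpa using hu
      have hmul : Tendsto (fun τ => f (τ * u) * phi1 u) atTop (nhds 0) := by
        rcases lt_or_gt_of_ne hu0 with h | h
        · have ht : Tendsto (fun τ : ℝ => τ * u) atTop atBot :=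
            tendsto_id.atTop_mul_const_of_neg h
          simpa using (hfvanish.2.comp ht).mul_const (phi1 u)
        · have ht : Tendsto (fun τ : ℝ => τ * u) atTop atTop :=
            tendsto_id.atTop_mul_const h
          simpa using (hfvanish.1.comp ht).mul_const (phi1 u)
      exact squeeze_zero (fun τ => hFnonneg τ u) (fun τ => hFle τ u) hmul
  -- change of variables
  have key : ∀ τ : ℝ, 1 ≤ τ →
      m₁ τ = (2 * (1 - stdNormalCdf (δ / τ)))⁻¹ * J τ := by
    intro τ hτ
    have hτ0 : (0 : ℝ) < τ := lt_of_lt_of_le one_pos hτ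
    set g : ℝ → ℝ :=
      fun θ => f θ * ((Real.sqrt (2 * Real.pi * τ ^ 2))⁻¹ * Real.exp (-θ ^ 2 / (2 * τ ^ 2)))
      with hgdef
    have hI : ∫ θ in S, g θ = J τ := by
      have hpt : ∀ x : ℝ, Set.indicator S g (τ * x) = τ⁻¹ * F τ x := by
        intro x
        have hmem : τ * x ∈ S ↔ x ∈ {u : ℝ | |u| > δ / τ} := by
          simp only [hSdef, Set.mem_setOf_eq, abs_mul, abs_of_pos hτ0, gt_iff_lt]
          rw [div_lt_iff₀ hτ0, mul_comm]
        have hval : g (τ * x) = τ⁻¹ * (f (τ * x) * phi1 x) := by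
          have hsqrt : Real.sqrt (2 * Real.pi * τ ^ 2) = Real.sqrt (2 * Real.pi) * τ := by
            rw [Real.sqrt_mul (by positivity), Real.sqrt_sq hτ0.le]
          have hexp : -(τ * x) ^ 2 / (2 * τ ^ 2) = -x ^ 2 / 2 := by
            field_simp
          simp only [hgdef, phi1, hexp, hsqrt, mul_inv]
          ring
        by_cases hx : x ∈ {u : ℝ | |u| > δ / τ}
        · rw [Set.indicator_of_mem (hmem.mpr hx), hval]
          simp only [hFdef]
          rw [Set.indicator_of_mem hx]
        · rw [Set.indicator_of_notMem (fun h => hx (hmem.mp h))]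
          simp only [hFdef]
          rw [Set.indicator_of_notMem hx, mul_zero]
      have h2 : (∫ x : ℝ, Set.indicator S g (τ * x)) = |τ⁻¹| • ∫ θ, Set.indicator S g θ :=
        Measure.integral_comp_mul_left _ τ
      have h3 : (∫ x : ℝ, Set.indicator S g (τ * x)) = τ⁻¹ * J τ := by
        simp_rw [hpt]
        rw [integral_const_mul]
      rw [← integral_indicator hSmeas]
      have h4 : τ⁻¹ * (∫ θ, Set.indicator S g θ) = τ⁻¹ * J τ := by
        rw [← h3, h2, abs_of_pos (inv_pos.mpr hτ0), smul_eq_mul]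
      exact mul_left_cancel₀ (inv_ne_zero hτ0.ne') h4
    rw [hm₁]
    simp only
    have hinteg : (fun θ => f θ * ((Real.sqrt (2 * Real.pi * τ ^ 2))⁻¹ *
        Real.exp (-θ ^ 2 / (2 * τ ^ 2)) / (2 * (1 - stdNormalCdf (δ / τ)))))
        = fun θ => (2 * (1 - stdNormalCdf (δ / τ)))⁻¹ * g θ := by
      funext θ
      simp only [hgdef]
      ring
    rw [hinteg, integral_const_mul, hI]
  -- squeeze
  set p : ℝ := ((gaussianReal 0 1) (Set.Ioi δ)).toReal with hpdef
  have hp : 0 < p := gauss_Ioi_pos δ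
  have hD : ∀ τ : ℝ, 1 ≤ τ → 2 * p ≤ 2 * (1 - stdNormalCdf (δ / τ)) := by
    intro τ hτ
    have hsub : Set.Ioi δ ⊆ Set.Ioi (δ / τ) :=
      Set.Ioi_subset_Ioi (div_le_self hδ.le hτ)
    have := ENNReal.toReal_mono (measure_ne_top (gaussianReal 0 1) _) (measure_mono (μ := gaussianReal 0 1) hsub)
    rw [cdf_compl]
    linarith [this]
  have hJnonneg : ∀ τ : ℝ, 0 ≤ J τ := fun τ => integral_nonneg (hFnonneg τ)
  have hub : Tendsto (fun τ => (2 * p)⁻¹ * J τ) atTop (nhds 0) := by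
    simpa using hJ0.const_mul (2 * p)⁻¹
  refine tendsto_of_tendsto_of_tendsto_of_le_of_le' tendsto_const_nhds hub ?_ ?_
  · filter_upwards [eventually_ge_atTop (1 : ℝ)] with τ hτ
    rw [key τ hτ]
    exact mul_nonneg (inv_nonneg.mpr (by linarith [hD τ hτ])) (hJnonneg τ)
  · filter_upwards [eventually_ge_atTop (1 : ℝ)] with τ hτ
    rw [key τ hτ]
    exact mul_le_mul_of_nonneg_right
      (inv_anti₀ (by linarith) (hD τ hτ)) (hJnonneg τ)
end
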